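/- Let f : ℍ → ℍ be twice continuously real-differentiable on an open set containing q, and let μ ∈ ℍ be nonzero. Then 16 times the left GHR derivative with respect to μ, taken at q, of the function p ↦ (∂f/∂p^{μ*})(p) equals the Laplacian D₁(D₁f)(q) + Dᵢ(Dᵢf)(q) + Dⱼ(Dⱼf)(q) + Dₖ(Dₖf)(q), and the same holds with the two GHR derivatives taken in the opposite order (16·∂/∂q^{μ*}(∂f/∂q^μ) at q equals the same Laplacian). -/

import Mathlib

open Quaternion Filter Topology Asymptotics

noncomputable section

/-- The imaginary unit `i` of the real quaternions. -/
def qI : ℍ[ℝ] := ⟨0, 1, 0, 0⟩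
/-- The imaginary unit `j` of the real quaternions. -/
def qJ : ℍ[ℝ] := ⟨0, 0, 1, 0⟩
/-- The imaginary unit `k` of the real quaternions. -/
def qK : ℍ[ℝ] := ⟨0, 0, 0, 1⟩

/-- Quaternion rotation `p ↦ μ p μ⁻¹`. -/
def qRot (μ p : ℍ[ℝ]) : ℍ[ℝ] := μ * p * μ⁻¹

/-- The left GHR derivative `∂f/∂q^μ` at `q`. -/
def lD (f : ℍ[ℝ] → ℍ[ℝ]) (μ q : ℍ[ℝ]) : ℍ[ℝ] :=
  (4 : ℍ[ℝ])⁻¹ * (fderiv ℝ f q 1 - fderiv ℝ f q qI * qRot μ qI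
    - fderiv ℝ f q qJ * qRot μ qJ - fderiv ℝ f q qK * qRot μ qK)

/-- The left conjugate GHR derivative `∂f/∂q^{μ*}` at `q`. -/
def lDc (f : ℍ[ℝ] → ℍ[ℝ]) (μ q : ℍ[ℝ]) : ℍ[ℝ] :=
  (4 : ℍ[ℝ])⁻¹ * (fderiv ℝ f q 1 + fderiv ℝ f q qI * qRot μ qI
    + fderiv ℝ f q qJ * qRot μ qJ + fderiv ℝ f q qK * qRot μ qK)

/-- The right GHR derivative `∂ᵣf/∂q^μ` at `q`. -/
def rD (f : ℍ[ℝ] → ℍ[ℝ]) (μ q : ℍ[ℝ]) : ℍ[ℝ] :=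
  (4 : ℍ[ℝ])⁻¹ * (fderiv ℝ f q 1 - qRot μ qI * fderiv ℝ f q qI
    - qRot μ qJ * fderiv ℝ f q qJ - qRot μ qK * fderiv ℝ f q qK)

/-- The right conjugate GHR derivative `∂ᵣf/∂q^{μ*}` at `q`. -/
def rDc (f : ℍ[ℝ] → ℍ[ℝ]) (μ q : ℍ[ℝ]) : ℍ[ℝ] :=
  (4 : ℍ[ℝ])⁻¹ * (fderiv ℝ f q 1 + qRot μ qI * fderiv ℝ f q qI
    + qRot μ qJ * fderiv ℝ f q qJ + qRot μ qK * fderiv ℝ f q qK)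

@[simp] lemma qI_re : qI.re = 0 := rfl
@[simp] lemma qI_imI : qI.imI = 1 := rfl
@[simp] lemma qI_imJ : qI.imJ = 0 := rfl
@[simp] lemma qI_imK : qI.imK = 0 := rfl
@[simp] lemma qJ_re : qJ.re = 0 := rfl
@[simp] lemma qJ_imI : qJ.imI = 0 := rfl
@[simp] lemma qJ_imJ : qJ.imJ = 1 := rfl
@[simp] lemma qJ_imK : qJ.imK = 0 := rfl
@[simp] lemma qK_re : qK.re = 0 := rfl
@[simp] lemma qK_imI : qK.imI = 0 := rfl
@[simp] lemma qK_imJ : qK.imJ = 0 := rfl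
@[simp] lemma qK_imK : qK.imK = 1 := rfl

lemma qRot_mul (μ : ℍ[ℝ]) (hμ : μ ≠ 0) (x y : ℍ[ℝ]) :
    qRot μ x * qRot μ y = qRot μ (x * y) := by
  simp only [qRot, mul_assoc]
  rw [inv_mul_cancel_left₀ hμ]

lemma qRot_neg (μ x : ℍ[ℝ]) : qRot μ (-x) = -qRot μ x := by simp [qRot]

lemma qRot_neg_one (μ : ℍ[ℝ]) (hμ : μ ≠ 0) : qRot μ (-1) = -1 := by
  simp [qRot, mul_inv_cancel₀ hμ]

set_option maxHeartbeats 1000000 in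
theorem second_order_GHR_laplacian
    (f : ℍ[ℝ] → ℍ[ℝ]) (U : Set ℍ[ℝ]) (hU : IsOpen U) (q : ℍ[ℝ]) (hq : q ∈ U)
    (hf : ContDiffOn ℝ 2 f U) (μ : ℍ[ℝ]) (hμ : μ ≠ 0) :
    (16 : ℍ[ℝ]) * lD (fun p => lDc f μ p) μ q
      = fderiv ℝ (fun p => fderiv ℝ f p 1) q 1
        + fderiv ℝ (fun p => fderiv ℝ f p qI) q qI
        + fderiv ℝ (fun p => fderiv ℝ f p qJ) q qJ
        + fderiv ℝ (fun p => fderiv ℝ f p qK) q qK ∧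
    (16 : ℍ[ℝ]) * lDc (fun p => lD f μ p) μ q
      = fderiv ℝ (fun p => fderiv ℝ f p 1) q 1
        + fderiv ℝ (fun p => fderiv ℝ f p qI) q qI
        + fderiv ℝ (fun p => fderiv ℝ f p qJ) q qJ
        + fderiv ℝ (fun p => fderiv ℝ f p qK) q qK := by
  have hcd : ContDiffAt ℝ 2 f q := hf.contDiffAt (hU.mem_nhds hq)
  have hF : DifferentiableAt ℝ (fderiv ℝ f) q :=
    (hcd.fderiv_right (m := 1) (by norm_num)).differentiableAt one_ne_zero
  set S : ℍ[ℝ] →L[ℝ] ℍ[ℝ] →L[ℝ] ℍ[ℝ] := fderiv ℝ (fderiv ℝ f) q with hS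
  have hsymm : ∀ v w, S v w = S w v := hcd.isSymmSndFDerivAt (by simp [minSmoothness_of_isRCLikeNormedField])
  have hApply : ∀ v : ℍ[ℝ], HasFDerivAt (fun p => fderiv ℝ f p v)
      ((ContinuousLinearMap.apply ℝ ℍ[ℝ] v).comp S) q := fun v =>
    (ContinuousLinearMap.apply ℝ ℍ[ℝ] v).hasFDerivAt.comp q hF.hasFDerivAt
  have hfd : ∀ v w : ℍ[ℝ], fderiv ℝ (fun p => fderiv ℝ f p v) q w = S w v := fun v w => by
    rw [(hApply v).fderiv]; rfl
  set a := qRot μ qI with ha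
  set b := qRot μ qJ with hb
  set c := qRot μ qK with hc
  have haa : a * a = -1 := by
    rw [ha, qRot_mul μ hμ, show qI * qI = -1 by ext <;> simp, qRot_neg_one μ hμ]
  have hbb : b * b = -1 := by
    rw [hb, qRot_mul μ hμ, show qJ * qJ = -1 by ext <;> simp, qRot_neg_one μ hμ]
  have hcc : c * c = -1 := by
    rw [hc, qRot_mul μ hμ, show qK * qK = -1 by ext <;> simp, qRot_neg_one μ hμ]
  have hab : a * b = c := by
    rw [ha, hb, hc, qRot_mul μ hμ, show qI * qJ = qK by ext <;> simp]
  have hba : b * a = -c := by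
    rw [ha, hb, hc, qRot_mul μ hμ, show qJ * qI = -qK by ext <;> simp, qRot_neg]
  have hbc : b * c = a := by
    rw [ha, hb, hc, qRot_mul μ hμ, show qJ * qK = qI by ext <;> simp]
  have hcb : c * b = -a := by
    rw [ha, hb, hc, qRot_mul μ hμ, show qK * qJ = -qI by ext <;> simp, qRot_neg]
  have hca : c * a = b := by
    rw [ha, hb, hc, qRot_mul μ hμ, show qK * qI = qJ by ext <;> simp]
  have hac : a * c = -b := by
    rw [ha, hb, hc, qRot_mul μ hμ, show qI * qK = -qJ by ext <;> simp, qRot_neg]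
  set D : ℍ[ℝ] → (ℍ[ℝ] →L[ℝ] ℍ[ℝ]) :=
    fun v => (ContinuousLinearMap.apply ℝ ℍ[ℝ] v).comp S with hD0
  have hDc : HasFDerivAt (fun p => lDc f μ p)
      ((4:ℍ[ℝ])⁻¹ • (D 1 + (D qI).smulRight a + (D qJ).smulRight b + (D qK).smulRight c)) q := by
    have := ((((hApply 1).add ((hApply qI).mul_const' a)).add
      ((hApply qJ).mul_const' b)).add ((hApply qK).mul_const' c)).const_mul ((4:ℍ[ℝ])⁻¹)
    simp only [lDc, ← ha, ← hb, ← hc]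
    refine this.congr_fderiv (ContinuousLinearMap.ext fun w => ?_)
    simp [hD0]
  have hDcw : ∀ w, fderiv ℝ (fun p => lDc f μ p) q w
      = (4:ℍ[ℝ])⁻¹ * (S w 1 + S w qI * a + S w qJ * b + S w qK * c) := fun w => by
    rw [hDc.fderiv]
    simp only [ContinuousLinearMap.smul_apply, ContinuousLinearMap.add_apply,
      ContinuousLinearMap.smulRight_apply, ContinuousLinearMap.coe_comp', Function.comp_apply,
      ContinuousLinearMap.apply_apply, smul_eq_mul, hD0]
  have hDd : HasFDerivAt (fun p => lD f μ p)
      ((4:ℍ[ℝ])⁻¹ • (D 1 - (D qI).smulRight a - (D qJ).smulRight b - (D qK).smulRight c)) q := by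
    have := ((((hApply 1).sub ((hApply qI).mul_const' a)).sub
      ((hApply qJ).mul_const' b)).sub ((hApply qK).mul_const' c)).const_mul ((4:ℍ[ℝ])⁻¹)
    simp only [lD, ← ha, ← hb, ← hc]
    refine this.congr_fderiv (ContinuousLinearMap.ext fun w => ?_)
    simp [hD0]
  have hDw : ∀ w, fderiv ℝ (fun p => lD f μ p) q w
      = (4:ℍ[ℝ])⁻¹ * (S w 1 - S w qI * a - S w qJ * b - S w qK * c) := fun w => by
    rw [hDd.fderiv]
    simp only [ContinuousLinearMap.smul_apply, ContinuousLinearMap.sub_apply,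
      ContinuousLinearMap.smulRight_apply, ContinuousLinearMap.coe_comp', Function.comp_apply,
      ContinuousLinearMap.apply_apply, smul_eq_mul, hD0]
  have h40 : (4:ℍ[ℝ]) ≠ 0 := by
    intro h
    have := congrArg QuaternionAlgebra.re h
    rw [show ((4:ℍ[ℝ]).re) = 4 by rfl, show ((0:ℍ[ℝ]).re) = 0 by rfl] at this
    norm_num at this
  have h4 : (16:ℍ[ℝ]) * ((4:ℍ[ℝ])⁻¹ * (4:ℍ[ℝ])⁻¹) = 1 := by
    rw [show (16:ℍ[ℝ]) = 4 * 4 by norm_num, mul_assoc,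
      mul_inv_cancel_left₀ h40, mul_inv_cancel₀ h40]
  have h16s : ∀ x y z w : ℍ[ℝ],
      (16:ℍ[ℝ]) * ((4:ℍ[ℝ])⁻¹ * ((4:ℍ[ℝ])⁻¹ * x - (4:ℍ[ℝ])⁻¹ * (y)
        - (4:ℍ[ℝ])⁻¹ * (z) - (4:ℍ[ℝ])⁻¹ * (w))) = x - y - z - w := by
    intro x y z w
    calc (16:ℍ[ℝ]) * ((4:ℍ[ℝ])⁻¹ * ((4:ℍ[ℝ])⁻¹ * x - (4:ℍ[ℝ])⁻¹ * y
        - (4:ℍ[ℝ])⁻¹ * z - (4:ℍ[ℝ])⁻¹ * w))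
        = (16:ℍ[ℝ]) * ((4:ℍ[ℝ])⁻¹ * (4:ℍ[ℝ])⁻¹) * (x - y - z - w) := by
          simp only [mul_sub, mul_assoc]
      _ = x - y - z - w := by rw [h4, one_mul]
  have h16a : ∀ x y z w : ℍ[ℝ],
      (16:ℍ[ℝ]) * ((4:ℍ[ℝ])⁻¹ * ((4:ℍ[ℝ])⁻¹ * x + (4:ℍ[ℝ])⁻¹ * (y)
        + (4:ℍ[ℝ])⁻¹ * (z) + (4:ℍ[ℝ])⁻¹ * (w))) = x + y + z + w := by
    intro x y z w
    calc (16:ℍ[ℝ]) * ((4:ℍ[ℝ])⁻¹ * ((4:ℍ[ℝ])⁻¹ * x + (4:ℍ[ℝ])⁻¹ * y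
        + (4:ℍ[ℝ])⁻¹ * z + (4:ℍ[ℝ])⁻¹ * w))
        = (16:ℍ[ℝ]) * ((4:ℍ[ℝ])⁻¹ * (4:ℍ[ℝ])⁻¹) * (x + y + z + w) := by
          simp only [mul_add, mul_assoc]
      _ = x + y + z + w := by rw [h4, one_mul]
  constructor
  · rw [lD, hDcw 1, hDcw qI, hDcw qJ, hDcw qK, hfd 1 1, hfd qI qI, hfd qJ qJ, hfd qK qK]
    rw [mul_assoc ((4:ℍ[ℝ])⁻¹) _ a, mul_assoc ((4:ℍ[ℝ])⁻¹) _ b, mul_assoc ((4:ℍ[ℝ])⁻¹) _ c,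
      h16s]
    simp only [hsymm qI 1, hsymm qJ 1, hsymm qK 1, hsymm qJ qI, hsymm qK qI, hsymm qK qJ,
      add_mul, mul_assoc, haa, hbb, hcc, hab, hba, hbc, hcb, hca, hac,
      mul_neg, mul_one, mul_neg_one]
    abel
  · rw [lDc, hDw 1, hDw qI, hDw qJ, hDw qK, hfd 1 1, hfd qI qI, hfd qJ qJ, hfd qK qK]
    rw [mul_assoc ((4:ℍ[ℝ])⁻¹) _ a, mul_assoc ((4:ℍ[ℝ])⁻¹) _ b, mul_assoc ((4:ℍ[ℝ])⁻¹) _ c,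
      h16a]
    simp only [hsymm qI 1, hsymm qJ 1, hsymm qK 1, hsymm qJ qI, hsymm qK qI, hsymm qK qJ,
      sub_mul, add_mul, mul_assoc, haa, hbb, hcc, hab, hba, hbc, hcb, hca, hac,
      mul_neg, mul_one, mul_neg_one]
    abel

end
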